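/- Let G be a bipartite regular graph with adjacency matrix A_G. Define ĥ(G) := max{⟨C,X⟩ : X ⪰ 0, Tr(X) = 1, ⟨A_G,X⟩ = 0} and ĥ'(G) := max{⟨C,X⟩ : [[1, xᵀ],[x, X]] ⪰ 0, Tr(X) = 1, eᵀx = 1, ⟨A_G,X⟩ = 0}, where the maxima are over symmetric V×V matrices X (and vectors x ∈ ℝ^V for ĥ'). Then ĥ(G) = ĥ'(G). -/

import Mathlib

open Finset Matrix

variable {V : Type*} [Fintype V] [DecidableEq V]

/-- The trace inner product `⟨A,B⟩ = ∑_{i,j} A_{ij} B_{ij}` of two matrices. -/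
noncomputable def ip (A B : Matrix V V ℝ) : ℝ := ∑ i, ∑ j, A i j * B i j

/-- The matrix `C` associated to the bipartition `(P, Pᶜ)`: entry `1/2` whenever the two
indices lie on opposite sides of the bipartition, and `0` otherwise. -/
noncomputable def Cmat (P : Finset V) : Matrix V V ℝ :=
  Matrix.of fun i j => if (i ∈ P ↔ j ∈ P) then 0 else 1/2

/-- The `(1+|V|)×(1+|V|)` block matrix `[[1, xᵀ],[x, X]]`. -/
noncomputable def dblk (x : V → ℝ) (X : Matrix V V ℝ) : Matrix (Unit ⊕ V) (Unit ⊕ V) ℝ :=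
  Matrix.fromBlocks 1 (Matrix.of fun _ j => x j) (Matrix.of fun i _ => x i) X

/-- The semidefinite programming bound `h₁(G)` for a bipartite graph `G` with
bipartition `(P, Pᶜ)`. -/
noncomputable def h1 (G : SimpleGraph V) (P : Finset V) : ℝ :=
  sSup {x : ℝ | ∃ X : Matrix V V ℝ, X.PosSemidef ∧ X.trace = 1 ∧
    (∀ i j, G.Adj i j → X i j = 0) ∧ x = ip (Cmat P) X}

/-- The semidefinite programming bound `g₁(G)` for a bipartite graph `G` with
bipartition `(P, Pᶜ)`. -/
noncomputable def g1 (G : SimpleGraph V) (P : Finset V) : ℝ :=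
  sSup {x : ℝ | ∃ X : Matrix V V ℝ, (dblk (fun i => X i i) X).PosSemidef ∧
    (∀ i j, G.Adj i j → X i j = 0) ∧ x = ip (Cmat P) X}

/-- The adjacency matrix of a graph is Hermitian (over `ℝ`). -/
lemma adjHerm (G : SimpleGraph V) [DecidableRel G.Adj] : (G.adjMatrix ℝ).IsHermitian := by
  rw [Matrix.IsHermitian, Matrix.conjTranspose_eq_transpose_of_trivial]
  exact G.isSymm_adjMatrix

/-- The list of eigenvalues of a Hermitian matrix, with multiplicities,
sorted in nondecreasing order. -/
noncomputable def eigList (A : Matrix V V ℝ) (hA : A.IsHermitian) : List ℝ :=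
  (Finset.univ.val.map hA.eigenvalues).sort (· ≤ ·)

/-- The second largest eigenvalue (with multiplicities) of a Hermitian matrix. -/
noncomputable def secondLargest (A : Matrix V V ℝ) (hA : A.IsHermitian) : ℝ :=
  (eigList A hA).getD (Fintype.card V - 2) 0

/-- The smallest eigenvalue of a Hermitian matrix. -/
noncomputable def smallestEig (A : Matrix V V ℝ) (hA : A.IsHermitian) : ℝ :=
  (eigList A hA).getD 0 0

/-- A graph is edge-transitive if its automorphism group acts transitively on edges. -/
def EdgeTransitive (G : SimpleGraph V) : Prop :=
  ∀ e f : G.edgeSet, ∃ φ : G ≃g G, φ.mapEdgeSet e = f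

/-- A graph is vertex-transitive if its automorphism group acts transitively on vertices. -/
def VertexTransitive (G : SimpleGraph V) : Prop :=
  ∀ u v : V, ∃ φ : G ≃g G, φ u = v

/-- `ĥ(G) = max{⟨C,X⟩ : X ⪰ 0, Tr(X) = 1, ⟨A_G,X⟩ = 0}`. -/
noncomputable def hhatSdp (G : SimpleGraph V) [DecidableRel G.Adj] (P : Finset V) : ℝ :=
  sSup {x : ℝ | ∃ X : Matrix V V ℝ, X.PosSemidef ∧ X.trace = 1 ∧
    ip (G.adjMatrix ℝ) X = 0 ∧ x = ip (Cmat P) X}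

/-- `ĥ'(G) = max{⟨C,X⟩ : [[1,xᵀ],[x,X]] ⪰ 0, Tr(X) = 1, eᵀx = 1, ⟨A_G,X⟩ = 0}`. -/
noncomputable def hhatSdp' (G : SimpleGraph V) [DecidableRel G.Adj] (P : Finset V) : ℝ :=
  sSup {c : ℝ | ∃ (X : Matrix V V ℝ) (x : V → ℝ), (dblk x X).PosSemidef ∧ X.trace = 1 ∧
    (∑ i, x i) = 1 ∧ ip (G.adjMatrix ℝ) X = 0 ∧ c = ip (Cmat P) X}


set_option linter.unusedSectionVars false
set_option maxHeartbeats 1000000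

/-! ### Auxiliary lemmas for `stmt10` -/

/-- The quadratic form of a matrix. -/
noncomputable def qfAux (X : Matrix V V ℝ) (v : V → ℝ) : ℝ := ∑ i, ∑ j, v i * X i j * v j

lemma qfAux_eq (X : Matrix V V ℝ) (v : V → ℝ) : star v ⬝ᵥ X *ᵥ v = qfAux X v := by
  simp only [qfAux, dotProduct, mulVec, Pi.star_apply, star_trivial, Finset.mul_sum]
  exact Finset.sum_congr rfl fun i _ => Finset.sum_congr rfl fun j _ => by ring

lemma qfAux_nonneg {X : Matrix V V ℝ} (hX : X.PosSemidef) (v : V → ℝ) : 0 ≤ qfAux X v := by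
  rw [← qfAux_eq]; exact hX.dotProduct_mulVec_nonneg v

lemma psd_of_form {M : Matrix V V ℝ} (hH : M.IsHermitian) (h : ∀ v, 0 ≤ qfAux M v) :
    M.PosSemidef := .of_dotProduct_mulVec_nonneg hH fun v => by rw [qfAux_eq]; exact h v

lemma bil_symm {X : Matrix V V ℝ} (hX : X.IsHermitian) (u w : V → ℝ) :
    ∑ i, ∑ j, u i * X i j * w j = ∑ i, ∑ j, w i * X i j * u j := by
  rw [Finset.sum_comm]
  refine Finset.sum_congr rfl fun a _ => Finset.sum_congr rfl fun b _ => ?_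
  have hx : X b a = X a b := by
    have := hX.apply a b; simpa using this
  rw [hx]; ring

lemma outer_psd (a : ℝ) (ha : 0 ≤ a) (w : V → ℝ) :
    (a • Matrix.vecMulVec w w).PosSemidef := by
  refine psd_of_form ?_ ?_
  · ext i j
    simp [Matrix.conjTranspose_apply, Matrix.vecMulVec, mul_comm]
  · intro v
    have key : qfAux (a • Matrix.vecMulVec w w) v
        = a * ((∑ i, w i * v i) * (∑ i, w i * v i)) := by
      simp only [qfAux, Matrix.smul_apply, Matrix.vecMulVec, Matrix.of_apply, smul_eq_mul,
        Finset.mul_sum, Finset.sum_mul]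
      exact Finset.sum_congr rfl fun i _ => Finset.sum_congr rfl fun j _ => by ring
    rw [key]
    exact mul_nonneg ha (mul_self_nonneg _)

lemma vecMulVec_psd (w : V → ℝ) : (Matrix.vecMulVec w w).PosSemidef := by
  simpa using outer_psd 1 zero_le_one w

lemma dblk_psd_iff (x : V → ℝ) (X : Matrix V V ℝ) :
    (dblk x X).PosSemidef ↔ (X - Matrix.vecMulVec x x).PosSemidef := by
  have hC : (Matrix.of fun (i : V) (_ : Unit) => x i)
      = (Matrix.of fun (_ : Unit) (j : V) => x j)ᴴ := by
    ext i j; simp [Matrix.conjTranspose_apply]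
  haveI : Invertible (1 : Matrix Unit Unit ℝ) := invertibleOne
  rw [dblk, hC, Matrix.PosDef.fromBlocks₁₁ _ _ Matrix.PosDef.one]
  have key : (Matrix.of fun (_ : Unit) (j : V) => x j)ᴴ * (1 : Matrix Unit Unit ℝ)⁻¹ *
      (Matrix.of fun (_ : Unit) (j : V) => x j) = Matrix.vecMulVec x x := by
    rw [inv_one, Matrix.mul_one]
    ext i j
    simp [Matrix.mul_apply, Matrix.vecMulVec, Matrix.conjTranspose_apply]
  rw [key]

lemma psd_of_dblk {x : V → ℝ} {X : Matrix V V ℝ} (h : (dblk x X).PosSemidef) : X.PosSemidef := by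
  have h2 := (dblk_psd_iff x X).mp h
  have h3 := h2.add (vecMulVec_psd x)
  simpa using h3

lemma ipC_eq (P : Finset V) (X : Matrix V V ℝ) :
    ip (Cmat P) X
      = (qfAux X (fun _ => 1) - qfAux X (fun i => if i ∈ P then 1 else -1)) / 4 := by
  have key : ∀ i j, Cmat P i j * X i j =
      ((1:ℝ) * X i j * 1 - (if i ∈ P then (1:ℝ) else -1) * X i j *
        (if j ∈ P then (1:ℝ) else -1)) / 4 := by
    intro i j
    by_cases hi : i ∈ P <;> by_cases hj : j ∈ P <;> simp [Cmat, hi, hj] <;> ring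
  calc ip (Cmat P) X = ∑ i, ∑ j, ((1:ℝ) * X i j * 1 -
        (if i ∈ P then (1:ℝ) else -1) * X i j * (if j ∈ P then (1:ℝ) else -1)) / 4 :=
      Finset.sum_congr rfl fun i _ => Finset.sum_congr rfl fun j _ => key i j
    _ = _ := by
      simp only [← Finset.sum_div, Finset.sum_sub_distrib, qfAux]

lemma entry_le {X : Matrix V V ℝ} (hX : X.PosSemidef) (i j : V) :
    X i j ≤ (X i i + X j j) / 2 := by
  by_cases h : i = j
  · subst h; linarith []
  · have hsym : X j i = X i j := by simpa using hX.1.apply i j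
    have h0 : (0:ℝ) ≤ star (fun k => (if k = i then (1:ℝ) else 0) - if k = j then 1 else 0) ⬝ᵥ
        X *ᵥ (fun k => (if k = i then (1:ℝ) else 0) - if k = j then 1 else 0) := hX.dotProduct_mulVec_nonneg _
    have hval : star (fun k => (if k = i then (1:ℝ) else 0) - if k = j then 1 else 0) ⬝ᵥ
        X *ᵥ (fun k => (if k = i then (1:ℝ) else 0) - if k = j then 1 else 0)
        = X i i - X i j - X j i + X j j := by
      simp only [dotProduct, mulVec, Pi.star_apply, star_trivial, mul_sub, sub_mul, ite_mul,
        one_mul, zero_mul, mul_ite, mul_one, mul_zero, Finset.sum_sub_distrib,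
        Finset.sum_ite_eq', Finset.mem_univ, if_true]
      ring
    rw [hval] at h0
    linarith

lemma qfAux_one_eq (X : Matrix V V ℝ) : qfAux X (fun _ => 1) = ∑ i, ∑ j, X i j := by
  simp [qfAux]

lemma sum_entries_le {X : Matrix V V ℝ} (hX : X.PosSemidef) (htr : X.trace = 1) :
    qfAux X (fun _ => 1) ≤ (Fintype.card V : ℝ) := by
  have htr' : ∑ i, X i i = 1 := by simpa [Matrix.trace, Matrix.diag] using htr
  rw [qfAux_one_eq]
  calc ∑ i, ∑ j, X i j ≤ ∑ i, ∑ j, (X i i + X j j) / 2 :=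
        Finset.sum_le_sum fun i _ => Finset.sum_le_sum fun j _ => entry_le hX i j
    _ = (Fintype.card V : ℝ) := by
      have e1 : ∀ i, ∑ j, (X i i + X j j) / 2 = (Fintype.card V : ℝ) * (X i i / 2) + 1 / 2 := by
        intro i
        calc ∑ j, (X i i + X j j) / 2 = ∑ _j : V, (X i i / 2) + ∑ j, X j j / 2 := by
              rw [← Finset.sum_add_distrib]
              exact Finset.sum_congr rfl fun j _ => by ring
          _ = (Fintype.card V : ℝ) * (X i i / 2) + 1 / 2 := by
              rw [Finset.sum_const, ← Finset.sum_div, htr', nsmul_eq_mul, Finset.card_univ]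
      calc ∑ i, ∑ j, (X i i + X j j) / 2
          = ∑ i, ((Fintype.card V : ℝ) * (X i i / 2) + 1 / 2) :=
            Finset.sum_congr rfl fun i _ => e1 i
        _ = (Fintype.card V : ℝ) * ((∑ i, X i i) / 2) + (Fintype.card V : ℝ) * (1 / 2) := by
            rw [Finset.sum_add_distrib, ← Finset.mul_sum, ← Finset.sum_div, Finset.sum_const,
              nsmul_eq_mul, Finset.card_univ]
        _ = (Fintype.card V : ℝ) := by rw [htr']; ring

lemma val_le {P : Finset V} {X : Matrix V V ℝ} (hX : X.PosSemidef) (htr : X.trace = 1) :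
    ip (Cmat P) X ≤ (Fintype.card V : ℝ) := by
  have h1 := qfAux_nonneg hX (fun i => if i ∈ P then (1:ℝ) else -1)
  have h2 := sum_entries_le hX htr
  have h3 : (0:ℝ) ≤ (Fintype.card V : ℝ) := Nat.cast_nonneg _
  rw [ipC_eq]
  linarith

lemma lift_mem (G : SimpleGraph V) [DecidableRel G.Adj] (P : Finset V) {X : Matrix V V ℝ}
    (hX : X.PosSemidef) (htr : X.trace = 1) (hA : ip (G.adjMatrix ℝ) X = 0)
    (hb1 : 1 ≤ qfAux X (fun _ => 1)) :
    ip (Cmat P) X ∈ {c : ℝ | ∃ (Y : Matrix V V ℝ) (x : V → ℝ), (dblk x Y).PosSemidef ∧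
      Y.trace = 1 ∧ (∑ i, x i) = 1 ∧ ip (G.adjMatrix ℝ) Y = 0 ∧ c = ip (Cmat P) Y} := by
  set β : ℝ := qfAux X (fun _ => 1) with hβdef
  have hβpos : 0 < β := lt_of_lt_of_le one_pos hb1
  have hβ' : β = ∑ i, ∑ j, X i j := by simp [hβdef, qfAux]
  set x : V → ℝ := fun i => (∑ j, X i j) / β with hxdef
  refine ⟨X, x, ?_, htr, ?_, hA, rfl⟩
  · rw [dblk_psd_iff]
    have hMH : (Matrix.vecMulVec x x).IsHermitian := by
      ext i j
      simp [Matrix.conjTranspose_apply, Matrix.vecMulVec, mul_comm]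
    refine psd_of_form (hX.1.sub hMH) ?_
    intro v
    set b : ℝ := ∑ i, ∑ j, v i * X i j with hbdef
    have key2 : ∀ u : V → ℝ, (∑ i, ∑ j, u i * (x i * x j) * u j)
        = (∑ i, x i * u i) * (∑ i, x i * u i) := by
      intro u
      simp only [Finset.sum_mul, Finset.mul_sum]
      exact Finset.sum_congr rfl fun i _ => Finset.sum_congr rfl fun j _ => by ring
    have hsplit : qfAux (X - Matrix.vecMulVec x x) v
        = qfAux X v - (∑ i, x i * v i) * (∑ i, x i * v i) := by
      simp only [qfAux, Matrix.sub_apply, Matrix.vecMulVec, Matrix.of_apply, sub_mul, mul_sub,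
        Finset.sum_sub_distrib]
      rw [key2 v]
    have hxv : ∑ i, x i * v i = b / β := by
      simp only [hxdef, hbdef, div_mul_eq_mul_div, ← Finset.sum_div]
      congr 1
      exact Finset.sum_congr rfl fun i _ => by
        rw [Finset.sum_mul]; exact Finset.sum_congr rfl fun j _ => by ring
    have hsym : ∑ i, ∑ j, X i j * v j = b := by
      have h := bil_symm hX.1 v (fun _ => 1)
      simp only [one_mul, mul_one] at h
      rw [hbdef]; rw [← h]
    have hq : ∀ t : ℝ, 0 ≤ qfAux X v * (t * t) + (2 * b) * t + β := by
      intro t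
      have h0 := qfAux_nonneg hX (fun k => t * v k + 1)
      have hexp : qfAux X (fun k => t * v k + 1)
          = qfAux X v * (t * t) + b * t + (∑ i, ∑ j, X i j * v j) * t + β := by
        rw [hβ', hbdef]
        simp only [qfAux, Finset.sum_mul, Finset.mul_sum, ← Finset.sum_add_distrib]
        exact Finset.sum_congr rfl fun i _ => Finset.sum_congr rfl fun j _ => by ring
      rw [hexp, hsym] at h0
      linarith
    have hdisc := discrim_le_zero hq
    rw [discrim] at hdisc
    have hCS : b ^ 2 ≤ qfAux X v * β := by nlinarith
    have hqv : 0 ≤ qfAux X v := qfAux_nonneg hX v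
    rw [hsplit, hxv]
    have hfrac : b / β * (b / β) = b ^ 2 / (β * β) := by
      rw [div_mul_div_comm]; ring_nf
    rw [hfrac]
    have hd : b ^ 2 / (β * β) ≤ qfAux X v := by
      rw [div_le_iff₀ (by positivity : (0:ℝ) < β * β)]
      nlinarith [mul_nonneg hqv hβpos.le]
    linarith
  · rw [hxdef]
    simp only
    rw [← Finset.sum_div, ← hβ']
    exact div_self (ne_of_gt hβpos)

section X0aux
variable [Nonempty V]

/-- The normalized identity matrix. -/
noncomputable def X0 : Matrix V V ℝ := ((Fintype.card V : ℝ))⁻¹ • (1 : Matrix V V ℝ)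

lemma cardposAux : (0:ℝ) < (Fintype.card V : ℝ) := by exact_mod_cast Fintype.card_pos

lemma X0_trace : (X0 : Matrix V V ℝ).trace = 1 := by
  rw [X0, Matrix.trace_smul, Matrix.trace_one, smul_eq_mul]
  exact inv_mul_cancel₀ (ne_of_gt cardposAux)

lemma X0_diagsum (M : Matrix V V ℝ) (hd : ∀ i, M i i = 0) : ip M (X0 : Matrix V V ℝ) = 0 := by
  rw [ip, X0]
  have key : ∀ i j, M i j * (((Fintype.card V : ℝ))⁻¹ • (1 : Matrix V V ℝ)) i j
      = if i = j then M i j * ((Fintype.card V : ℝ))⁻¹ else 0 := by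
    intro i j
    by_cases h : i = j <;> simp [Matrix.one_apply, h]
  calc ∑ i, ∑ j, M i j * (((Fintype.card V : ℝ))⁻¹ • (1 : Matrix V V ℝ)) i j
      = ∑ i : V, ∑ j, if i = j then M i j * ((Fintype.card V : ℝ))⁻¹ else 0 :=
        Finset.sum_congr rfl fun i _ => Finset.sum_congr rfl fun j _ => key i j
    _ = ∑ i : V, M i i * ((Fintype.card V : ℝ))⁻¹ := by
        refine Finset.sum_congr rfl fun i _ => ?_
        rw [Finset.sum_ite_eq]
        simp
    _ = 0 := by simp [hd]

lemma X0_ipA (G : SimpleGraph V) [DecidableRel G.Adj] :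
    ip (G.adjMatrix ℝ) (X0 : Matrix V V ℝ) = 0 :=
  X0_diagsum _ fun i => by simp

lemma X0_ipC (P : Finset V) : ip (Cmat P) (X0 : Matrix V V ℝ) = 0 :=
  X0_diagsum _ fun i => by simp [Cmat]

lemma X0_dblk (P : Finset V) :
    (dblk (fun _ => ((Fintype.card V : ℝ))⁻¹) (X0 : Matrix V V ℝ)).PosSemidef := by
  rw [dblk_psd_iff]
  set a : ℝ := ((Fintype.card V : ℝ))⁻¹ with ha
  have hapos : 0 < a := by rw [ha]; exact inv_pos.mpr cardposAux
  refine psd_of_form ?_ ?_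
  · ext i j
    simp [Matrix.conjTranspose_apply, Matrix.sub_apply, Matrix.vecMulVec, Matrix.one_apply, X0]
    by_cases h : i = j <;> simp [h, eq_comm]
  · intro v
    have hqf : qfAux ((X0 : Matrix V V ℝ) - Matrix.vecMulVec (fun _ => a) (fun _ => a)) v
        = a * (∑ i, v i * v i) - (a * ∑ i, v i) * (a * ∑ i, v i) := by
      simp only [qfAux, Matrix.sub_apply, Matrix.vecMulVec, Matrix.of_apply, sub_mul, mul_sub,
        Finset.sum_sub_distrib]
      congr 1
      · rw [X0, Finset.mul_sum]
        refine Finset.sum_congr rfl fun i _ => ?_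
        have key : ∀ j, v i * ((a • (1 : Matrix V V ℝ)) i j) * v j
            = if i = j then a * (v i * v j) else 0 := by
          intro j; by_cases h : i = j <;> simp [Matrix.one_apply, h] <;> ring
        rw [Finset.sum_congr rfl fun j _ => key j, Finset.sum_ite_eq]
        simp
      · simp only [Finset.mul_sum, Finset.sum_mul]
        exact Finset.sum_congr rfl fun i _ => Finset.sum_congr rfl fun j _ => by ring
    rw [hqf]
    have hCS : (∑ i, v i) ^ 2 ≤ (Fintype.card V : ℝ) * ∑ i, v i ^ 2 := by
      have := sq_sum_le_card_mul_sum_sq (s := (Finset.univ : Finset V)) (f := v)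
      simpa [Finset.card_univ] using this
    have hsq : ∑ i, v i * v i = ∑ i, v i ^ 2 :=
      Finset.sum_congr rfl fun i _ => by ring
    rw [hsq]
    have hcard : a * (Fintype.card V : ℝ) = 1 := inv_mul_cancel₀ (ne_of_gt cardposAux)
    have h1 := mul_le_mul_of_nonneg_left hCS (mul_nonneg hapos.le hapos.le)
    have h2 : a * a * ((Fintype.card V : ℝ) * ∑ i, v i ^ 2) = a * ∑ i, v i ^ 2 := by
      calc a * a * ((Fintype.card V : ℝ) * ∑ i, v i ^ 2)
          = (a * (Fintype.card V : ℝ)) * (a * ∑ i, v i ^ 2) := by ring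
        _ = a * ∑ i, v i ^ 2 := by rw [hcard]; ring
    have h3 : (a * ∑ i, v i) * (a * ∑ i, v i) = a * a * (∑ i, v i) ^ 2 := by ring
    linarith [h1, h2, h3]

end X0aux

/-- for a bipartite regular graph `G`, `ĥ(G) = ĥ'(G)`. -/
theorem stmt10 (G : SimpleGraph V) [DecidableRel G.Adj] (P : Finset V)
    (hbip : ∀ ⦃u v⦄, G.Adj u v → (u ∈ P ↔ v ∉ P))
    (r : ℕ) (hreg : G.IsRegularOfDegree r) :
    hhatSdp G P = hhatSdp' G P := by
  classical
  unfold hhatSdp hhatSdp'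
  set S : Set ℝ := {x : ℝ | ∃ X : Matrix V V ℝ, X.PosSemidef ∧ X.trace = 1 ∧
    ip (G.adjMatrix ℝ) X = 0 ∧ x = ip (Cmat P) X} with hS
  set S' : Set ℝ := {c : ℝ | ∃ (X : Matrix V V ℝ) (x : V → ℝ), (dblk x X).PosSemidef ∧
    X.trace = 1 ∧ (∑ i, x i) = 1 ∧ ip (G.adjMatrix ℝ) X = 0 ∧ c = ip (Cmat P) X} with hS'
  have hbddS : BddAbove S := by
    refine ⟨(Fintype.card V : ℝ), fun c hc => ?_⟩
    obtain ⟨X, hpsd, htr, _, rfl⟩ := hc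
    exact val_le hpsd htr
  have hbddS' : BddAbove S' := by
    refine ⟨(Fintype.card V : ℝ), fun c hc => ?_⟩
    obtain ⟨X, x, hblk, htr, _, _, rfl⟩ := hc
    exact val_le (psd_of_dblk hblk) htr
  have hsub : S' ⊆ S := by
    rintro c ⟨X, x, hblk, htr, _, hipA, rfl⟩
    exact ⟨X, psd_of_dblk hblk, htr, hipA, rfl⟩
  cases isEmpty_or_nonempty V with
  | inl hemp =>
    have h1 : S = ∅ := by
      rw [hS]; ext c
      simp only [Set.mem_setOf_eq, Set.mem_empty_iff_false, iff_false]
      rintro ⟨X, _, htr, _⟩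
      have h0 : X.trace = 0 := by simp [Matrix.trace]
      rw [h0] at htr; norm_num at htr
    have h2 : S' = ∅ := by
      rw [hS']; ext c
      simp only [Set.mem_setOf_eq, Set.mem_empty_iff_false, iff_false]
      rintro ⟨X, x, _, htr, _⟩
      have h0 : X.trace = 0 := by simp [Matrix.trace]
      rw [h0] at htr; norm_num at htr
    rw [h1, h2]
  | inr hne =>
    have hmem0S' : (0:ℝ) ∈ S' := by
      refine ⟨X0, fun _ => ((Fintype.card V : ℝ))⁻¹, X0_dblk P, X0_trace, ?_, X0_ipA G,
        (X0_ipC P).symm⟩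
      rw [Finset.sum_const, nsmul_eq_mul, Finset.card_univ]
      exact mul_inv_cancel₀ (ne_of_gt cardposAux)
    have hmem0S : (0:ℝ) ∈ S := hsub hmem0S'
    by_cases hall : ∀ u v : V, ¬(u ∈ P ↔ v ∈ P) → G.Adj u v
    · -- complete multipartite case: all feasible values are 0
      have hCA : ∀ Y : Matrix V V ℝ, ip (Cmat P) Y = ip (G.adjMatrix ℝ) Y / 2 := by
        intro Y
        have key : ∀ i j, Cmat P i j = (G.adjMatrix ℝ) i j / 2 := by
          intro i j
          by_cases h : i ∈ P ↔ j ∈ P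
          · have hnadj : ¬ G.Adj i j := by
              intro hadj
              have := hbip hadj
              tauto
            simp [Cmat, h, hnadj]
          · have hadj : G.Adj i j := hall i j h
            simp [Cmat, h, hadj]
        rw [ip, ip, Finset.sum_div]
        refine Finset.sum_congr rfl fun i _ => ?_
        rw [Finset.sum_div]
        refine Finset.sum_congr rfl fun j _ => ?_
        rw [key i j]; ring
      have h1 : S = {0} := by
        apply Set.eq_singleton_iff_unique_mem.mpr
        refine ⟨hmem0S, fun c hc => ?_⟩
        obtain ⟨X, _, _, hipA, rfl⟩ := hc
        rw [hCA X, hipA]; norm_num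
      have h2 : S' = {0} := by
        apply Set.eq_singleton_iff_unique_mem.mpr
        refine ⟨hmem0S', fun c hc => ?_⟩
        obtain ⟨X, x, _, _, _, hipA, rfl⟩ := hc
        rw [hCA X, hipA]; norm_num
      rw [h1, h2]
    · -- there exists a nonadjacent pair on opposite sides
      push_neg at hall
      obtain ⟨u, v, hPuv0, hnadj⟩ := hall
      have hPuv : ¬(u ∈ P ↔ v ∈ P) := by tauto
      have hne' : u ≠ v := by rintro rfl; tauto
      set w : V → ℝ := fun k => if k = u then 1 else if k = v then 1 else 0 with hwdef
      have hwu : w u = 1 := by simp [hwdef]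
      have hwv : w v = 1 := by simp [hwdef]
      have hsum1 : ∀ f : V → ℝ, ∑ k, w k * f k = f u + f v := by
        intro f
        have hterm : ∀ k, w k * f k = (if k = u then f k else 0) + (if k = v then f k else 0) := by
          intro k
          by_cases h1 : k = u
          · subst h1; simp [hwdef, hne']
          · by_cases h2 : k = v
            · subst h2; simp [hwdef, h1]
            · simp [hwdef, h1, h2]
        calc ∑ k, w k * f k = ∑ k, ((if k = u then f k else 0) + (if k = v then f k else 0)) :=
              Finset.sum_congr rfl fun k _ => hterm k
          _ = f u + f v := by
              rw [Finset.sum_add_distrib, Finset.sum_ite_eq', Finset.sum_ite_eq']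
              simp
      have hsum2 : ∀ g : V → V → ℝ,
          (∑ i, ∑ j, g i j * (w i * w j)) = g u u + g u v + g v u + g v v := by
        intro g
        have hrow : ∀ i, ∑ j, g i j * (w i * w j) = w i * (g i u + g i v) := by
          intro i
          calc ∑ j, g i j * (w i * w j) = ∑ j, w j * (g i j * w i) :=
                Finset.sum_congr rfl fun j _ => by ring
            _ = g i u * w i + g i v * w i := hsum1 (fun j => g i j * w i)
            _ = w i * (g i u + g i v) := by ring
        calc ∑ i, ∑ j, g i j * (w i * w j) = ∑ i, w i * (g i u + g i v) :=
              Finset.sum_congr rfl fun i _ => hrow i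
          _ = (g u u + g u v) + (g v u + g v v) := hsum1 _
          _ = g u u + g u v + g v u + g v v := by ring
      set X1 : Matrix V V ℝ := (1/2 : ℝ) • Matrix.vecMulVec w w with hX1def
      have hX1app : ∀ i j, X1 i j = (1/2) * (w i * w j) := by
        intro i j; simp [hX1def, Matrix.vecMulVec]
      have hX1tr : X1.trace = 1 := by
        have htr0 : X1.trace = ∑ i, X1 i i := by simp [Matrix.trace, Matrix.diag]
        rw [htr0]
        calc ∑ i, X1 i i = ∑ i, w i * (w i * (1/2)) := by
              refine Finset.sum_congr rfl fun i _ => ?_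
              rw [hX1app]; ring
          _ = w u * (1/2) + w v * (1/2) := hsum1 (fun k => w k * (1/2))
          _ = 1 := by rw [hwu, hwv]; norm_num
      have hX1A : ip (G.adjMatrix ℝ) X1 = 0 := by
        rw [ip]
        calc ∑ i, ∑ j, (G.adjMatrix ℝ) i j * X1 i j
            = ∑ i, ∑ j, ((G.adjMatrix ℝ) i j * (1/2)) * (w i * w j) := by
              refine Finset.sum_congr rfl fun i _ => Finset.sum_congr rfl fun j _ => ?_
              rw [hX1app]; ring
          _ = (G.adjMatrix ℝ) u u * (1/2) + (G.adjMatrix ℝ) u v * (1/2)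
              + (G.adjMatrix ℝ) v u * (1/2) + (G.adjMatrix ℝ) v v * (1/2) :=
            hsum2 (fun i j => (G.adjMatrix ℝ) i j * (1/2))
          _ = 0 := by
              have hnadj' : ¬ G.Adj v u := fun h => hnadj h.symm
              simp [hnadj, hnadj']
      have hX1C : ip (Cmat P) X1 = 1/2 := by
        rw [ip]
        calc ∑ i, ∑ j, Cmat P i j * X1 i j
            = ∑ i, ∑ j, (Cmat P i j * (1/2)) * (w i * w j) := by
              refine Finset.sum_congr rfl fun i _ => Finset.sum_congr rfl fun j _ => ?_
              rw [hX1app]; ring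
          _ = Cmat P u u * (1/2) + Cmat P u v * (1/2)
              + Cmat P v u * (1/2) + Cmat P v v * (1/2) :=
            hsum2 (fun i j => Cmat P i j * (1/2))
          _ = 1/2 := by
              have h1 : Cmat P u u = 0 := by simp [Cmat]
              have h4 : Cmat P v v = 0 := by simp [Cmat]
              have h2 : Cmat P u v = 1/2 := by simp [Cmat, hPuv]
              have h3 : Cmat P v u = 1/2 := by
                have hvu : ¬(v ∈ P ↔ u ∈ P) := fun h => hPuv h.symm
                simp [Cmat, hvu]
              rw [h1, h2, h3, h4]; norm_num
      have hX1blk : (dblk (fun k => w k / 2) X1).PosSemidef := by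
        rw [dblk_psd_iff]
        have hsub1 : X1 - Matrix.vecMulVec (fun k => w k / 2) (fun k => w k / 2)
            = (1/4 : ℝ) • Matrix.vecMulVec w w := by
          ext i j
          rw [Matrix.sub_apply, hX1app]
          simp [Matrix.vecMulVec, Matrix.smul_apply, smul_eq_mul]
          ring
        rw [hsub1]
        exact outer_psd (1/4) (by norm_num) w
      have hsumx1 : ∑ k, w k / 2 = 1 := by
        calc ∑ k, w k / 2 = ∑ k, w k * (1/2) := Finset.sum_congr rfl fun k _ => by ring
          _ = 1/2 + 1/2 := hsum1 (fun _ => 1/2)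
          _ = 1 := by norm_num
      have hhalf : (1/2 : ℝ) ∈ S' :=
        ⟨X1, fun k => w k / 2, hX1blk, hX1tr, hsumx1, hX1A, hX1C.symm⟩
      apply le_antisymm
      · refine csSup_le ⟨0, hmem0S⟩ fun c hc => ?_
        obtain ⟨X, hpsd, htr, hipA, rfl⟩ := hc
        rcases le_or_gt (ip (Cmat P) X) (1/2) with hle | hgt
        · exact hle.trans (le_csSup hbddS' hhalf)
        · have hb1 : 1 ≤ qfAux X (fun _ => 1) := by
            have h1 := qfAux_nonneg hpsd (fun i => if i ∈ P then (1:ℝ) else -1)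
            have h2 := ipC_eq P X
            rw [h2] at hgt
            linarith
          exact le_csSup hbddS' (lift_mem G P hpsd htr hipA hb1)
      · exact csSup_le ⟨0, hmem0S'⟩ fun c hc => le_csSup hbddS (hsub hc)
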